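/- For every positive integer n, FW(2) = SDD_n: a symmetric n×n real matrix has factor width at most 2 if and only if it is scaled diagonally dominant. -/

import Mathlib

open Matrix Finset

noncomputable section

/-- `e i` is the standard basis vector with a `1` in coordinate `i`. -/
def e {n : ℕ} (i : Fin n) : Fin n → ℝ := Pi.single i 1

/-- The positive semidefinite cone `S^n_+`. -/
def PSDcone (n : ℕ) : Set (Matrix (Fin n) (Fin n) ℝ) :=
  {X | X.IsSymm ∧ ∀ d : Fin n → ℝ, 0 ≤ d ⬝ᵥ X.mulVec d}

/-- The set of diagonally dominant symmetric matrices `DD_n`. -/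
def DD (n : ℕ) : Set (Matrix (Fin n) (Fin n) ℝ) :=
  {A | A.IsSymm ∧ ∀ i, ∑ j ∈ Finset.univ.erase i, |A i j| ≤ A i i}

/-- The set of scaled diagonally dominant symmetric matrices `SDD_n`. -/
def SDD (n : ℕ) : Set (Matrix (Fin n) (Fin n) ℝ) :=
  {A | A.IsSymm ∧ ∃ D : Fin n → ℝ, (∀ i, 0 < D i) ∧
    Matrix.diagonal D * A * Matrix.diagonal D ∈ DD n}

/-- The conical hull of a set of matrices. -/
def coneHull {n : ℕ} (K : Set (Matrix (Fin n) (Fin n) ℝ)) :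
    Set (Matrix (Fin n) (Fin n) ℝ) :=
  {X | ∃ (k : ℕ) (c : Fin k → ℝ) (M : Fin k → Matrix (Fin n) (Fin n) ℝ),
    (∀ i, 0 ≤ c i) ∧ (∀ i, M i ∈ K) ∧ X = ∑ i, c i • M i}

/-- The dual cone within `S^n` w.r.t. the trace inner product. -/
def dualCone {n : ℕ} (K : Set (Matrix (Fin n) (Fin n) ℝ)) :
    Set (Matrix (Fin n) (Fin n) ℝ) :=
  {A | A.IsSymm ∧ ∀ B ∈ K, 0 ≤ Matrix.trace (Aᵀ * B)}

/-- The SD basis of Type I, as a set. -/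
def Bplus (n : ℕ) : Set (Matrix (Fin n) (Fin n) ℝ) :=
  {M | ∃ i j : Fin n, i ≤ j ∧ M = vecMulVec (e i + e j) (e i + e j)}

/-- The SD basis of Type II, as a set. -/
def Bminus (n : ℕ) : Set (Matrix (Fin n) (Fin n) ℝ) :=
  {M | ∃ i : Fin n, M = vecMulVec (e i + e i) (e i + e i)} ∪
    {M | ∃ i j : Fin n, i < j ∧ M = vecMulVec (e i - e j) (e i - e j)}

/-- The expanded SD basis matrix `B̄_{i,j}(α) = (e_i + α e_j)(e_i + α e_j)ᵀ`. -/
def Bbar {n : ℕ} (α : ℝ) (i j : Fin n) : Matrix (Fin n) (Fin n) ℝ :=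
  vecMulVec (e i + α • e j) (e i + α • e j)

/-- The expanded SD basis `B̄(α)`, as a set. -/
def BbarSet (n : ℕ) (α : ℝ) : Set (Matrix (Fin n) (Fin n) ℝ) :=
  {M | ∃ i j : Fin n, i ≤ j ∧ M = Bbar α i j}

/-- The space `S^n` of symmetric matrices as a submodule. -/
def symmSubmodule (n : ℕ) : Submodule ℝ (Matrix (Fin n) (Fin n) ℝ) where
  carrier := {A | A.IsSymm}
  add_mem' := fun {A B} hA hB => by
    simp only [Set.mem_setOf_eq, Matrix.IsSymm, Matrix.transpose_add] at *
    rw [hA, hB]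
  zero_mem' := by simp [Matrix.IsSymm]
  smul_mem' := fun c A hA => by
    simp only [Set.mem_setOf_eq, Matrix.IsSymm, Matrix.transpose_smul] at *
    rw [hA]

/-- Index set for pairs `1 ≤ i ≤ j ≤ n`. -/
abbrev SymIdx (n : ℕ) := {p : Fin n × Fin n // p.1 ≤ p.2}


/-- `FW(k)`: symmetric matrices of factor width at most `k`. -/
def FW (n k : ℕ) : Set (Matrix (Fin n) (Fin n) ℝ) :=
  {A | A.IsSymm ∧ ∃ (m : ℕ) (V : Matrix (Fin n) (Fin m) ℝ),
    A = V * Vᵀ ∧ ∀ c : Fin m, (Finset.univ.filter fun i => V i c ≠ 0).card ≤ k}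



def wDD {n : ℕ} (B : Matrix (Fin n) (Fin n) ℝ) (p : Fin n × Fin n) (i : Fin n) : ℝ :=
  if p.1 = p.2 then
    (if i = p.1 then Real.sqrt (B p.1 p.1 - ∑ j ∈ Finset.univ.erase p.1, |B p.1 j|) else 0)
  else if p.1 < p.2 then
    (if i = p.1 then Real.sqrt |B p.1 p.2| else 0)
      + (if i = p.2 then Real.sign (B p.1 p.2) * Real.sqrt |B p.1 p.2| else 0)
  else 0

lemma sign_sq_abs (x : ℝ) : (Real.sign x * Real.sqrt |x|) * (Real.sign x * Real.sqrt |x|) = |x| := by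
  rcases lt_trichotomy x 0 with h | h | h
  · rw [Real.sign_of_neg h]
    rw [show (-1 : ℝ) * Real.sqrt |x| * (-1 * Real.sqrt |x|) = Real.sqrt |x| * Real.sqrt |x| by ring,
      Real.mul_self_sqrt (abs_nonneg x)]
  · simp [h]
  · rw [Real.sign_of_pos h]
    rw [show (1 : ℝ) * Real.sqrt |x| * (1 * Real.sqrt |x|) = Real.sqrt |x| * Real.sqrt |x| by ring,
      Real.mul_self_sqrt (abs_nonneg x)]

lemma sign_mul_abs' (x : ℝ) : Real.sqrt |x| * (Real.sign x * Real.sqrt |x|) = x := by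
  rcases lt_trichotomy x 0 with h | h | h
  · rw [Real.sign_of_neg h,
      show Real.sqrt |x| * (-1 * Real.sqrt |x|) = -(Real.sqrt |x| * Real.sqrt |x|) by ring,
      Real.mul_self_sqrt (abs_nonneg x), abs_of_neg h, neg_neg]
  · simp [h]
  · rw [Real.sign_of_pos h,
      show Real.sqrt |x| * (1 * Real.sqrt |x|) = Real.sqrt |x| * Real.sqrt |x| by ring,
      Real.mul_self_sqrt (abs_nonneg x), abs_of_pos h]

lemma dd_decomp {n : ℕ} (B : Matrix (Fin n) (Fin n) ℝ) (hB : B ∈ DD n) (i j : Fin n) :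
    B i j = ∑ p : Fin n × Fin n, wDD B p i * wDD B p j := by
  classical
  obtain ⟨hsym, hdd⟩ := hB
  have hsymm : ∀ a b, B a b = B b a := fun a b => hsym.apply b a
  by_cases hij : i = j
  · subst hij
    have hslack : 0 ≤ B i i - ∑ k ∈ Finset.univ.erase i, |B i k| := by
      linarith [hdd i]
    have ht : ∀ p q : Fin n, wDD B (p, q) i * wDD B (p, q) i =
        (if i = p then ((if i = q then (B i i - ∑ k ∈ Finset.univ.erase i, |B i k|) else 0)
            + (if p < q then |B p q| else 0)) else 0)
        + (if i = q then (if p < i then |B p i| else 0) else 0) := by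
      intro p q
      by_cases h1 : p = q
      · subst h1
        by_cases h2 : i = p
        · subst h2
          simp only [wDD, eq_self_iff_true, if_true, lt_self_iff_false, if_false,
            add_zero, Real.mul_self_sqrt hslack]
        · simp only [wDD, eq_self_iff_true, if_true, if_neg h2, lt_self_iff_false, if_false,
            add_zero, zero_add, mul_zero, zero_mul]
      · rcases lt_or_gt_of_ne h1 with hlt | hgt
        · by_cases h2 : i = p
          · subst h2
            have h3 : ¬ i = q := fun h => h1 h
            simp only [wDD, if_neg h1, if_pos hlt, eq_self_iff_true, if_true, if_neg h3,
              add_zero, zero_add, Real.mul_self_sqrt (abs_nonneg (B i q)),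
              if_neg (asymm hlt : ¬ q < i)]
          · by_cases h3 : i = q
            · subst h3
              simp only [wDD, if_neg h1, if_pos hlt, if_neg h2, zero_add, add_zero,
                eq_self_iff_true, if_true, sign_sq_abs (B p i), if_pos hlt]
            · simp only [wDD, if_neg h1, if_pos hlt, if_neg h2, if_neg h3, add_zero,
                zero_add, mul_zero, zero_mul]
        · have hnlt : ¬ p < q := asymm hgt
          by_cases h2 : i = p
          · subst h2
            have h3 : ¬ i = q := fun h => h1 h
            simp only [wDD, if_neg h1, if_neg hnlt, if_neg h3, eq_self_iff_true, if_true,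
              add_zero, zero_add, mul_zero, zero_mul]
          · by_cases h3 : i = q
            · subst h3
              have h4 : ¬ p < i := asymm hgt
              simp only [wDD, if_neg h1, if_neg hnlt, if_neg h2, if_neg h4, eq_self_iff_true,
                if_true, add_zero, zero_add, mul_zero, zero_mul]
            · simp only [wDD, if_neg h1, if_neg hnlt, if_neg h2, if_neg h3, add_zero,
                zero_add, mul_zero, zero_mul]
    rw [Fintype.sum_prod_type]
    have hQ : ∀ p : Fin n, (∑ q, wDD B (p, q) i * wDD B (p, q) i) =
        (if i = p then ((B i i - ∑ k ∈ Finset.univ.erase i, |B i k|)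
          + ∑ q, (if p < q then |B p q| else 0)) else 0)
        + (if p < i then |B p i| else 0) := by
      intro p
      rw [Finset.sum_congr rfl (fun q _ => ht p q), Finset.sum_add_distrib]
      congr 1
      · by_cases h2 : i = p
        · subst h2
          simp only [eq_self_iff_true, if_true]
          rw [Finset.sum_add_distrib]
          congr 1
          simp only [Finset.sum_ite_eq, Finset.mem_univ, if_true]
        · simp only [if_neg h2, Finset.sum_const_zero]
      · simp only [Finset.sum_ite_eq, Finset.mem_univ, if_true]
    rw [Finset.sum_congr rfl (fun p _ => hQ p), Finset.sum_add_distrib]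
    simp only [Finset.sum_ite_eq, Finset.mem_univ, if_true]
    have hsplit : (∑ q, (if i < q then |B i q| else 0)) + (∑ p, (if p < i then |B p i| else 0))
        = ∑ k ∈ Finset.univ.erase i, |B i k| := by
      rw [← Finset.sum_add_distrib]
      rw [show (∑ k ∈ Finset.univ.erase i, |B i k|)
          = ∑ k, (if k = i then 0 else |B i k|) by
        rw [← Finset.add_sum_erase Finset.univ _ (Finset.mem_univ i), if_pos rfl, zero_add]
        exact Finset.sum_congr rfl (fun k hk => by rw [if_neg (Finset.ne_of_mem_erase hk)])]
      refine Finset.sum_congr rfl (fun k _ => ?_)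
      rcases lt_trichotomy i k with h | h | h
      · rw [if_pos h, if_neg (asymm h : ¬ k < i), if_neg (ne_of_gt h : k ≠ i), add_zero]
      · subst h
        rw [if_neg (lt_irrefl i), if_pos rfl, add_zero]
      · rw [if_neg (asymm h : ¬ i < k), if_pos h, if_neg (ne_of_lt h : k ≠ i), zero_add,
          hsymm k i]
    linarith [hsplit]
  · have hvanish : ∀ p ∈ (Finset.univ : Finset (Fin n × Fin n)),
        p ∉ ({(i,j),(j,i)} : Finset (Fin n × Fin n)) → wDD B p i * wDD B p j = 0 := by
      rintro ⟨p, q⟩ - hmem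
      simp only [Finset.mem_insert, Finset.mem_singleton, Prod.mk.injEq, not_or, not_and] at hmem
      obtain ⟨hm1, hm2⟩ := hmem
      by_cases h1 : p = q
      · subst h1
        by_cases h2 : i = p
        · have h3 : ¬ j = p := fun h => hij (h2.trans h.symm)
          simp only [wDD, eq_self_iff_true, if_true, if_neg h3, mul_zero]
        · simp only [wDD, eq_self_iff_true, if_true, if_neg h2, zero_mul]
      · rcases lt_or_gt_of_ne h1 with hlt | hgt
        · by_cases h2 : i = p
          · by_cases h3 : j = q
            · exact absurd h3.symm (hm1 h2.symm)
            · have h4 : ¬ j = p := fun h => hij (h2.trans h.symm)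
              simp only [wDD, if_neg h1, if_pos hlt, if_neg h4, if_neg h3, add_zero, mul_zero]
          · by_cases h3 : i = q
            · by_cases h4 : j = p
              · exact absurd h3.symm (hm2 h4.symm)
              · have h5 : ¬ j = q := fun h => hij (h3.trans h.symm)
                simp only [wDD, if_neg h1, if_pos hlt, if_neg h4, if_neg h5, add_zero, mul_zero]
            · simp only [wDD, if_neg h1, if_pos hlt, if_neg h2, if_neg h3, add_zero, zero_mul]
        · simp only [wDD, if_neg h1, if_neg (asymm hgt : ¬ p < q), zero_mul]
    rw [← Finset.sum_subset (Finset.subset_univ {(i,j),(j,i)}) hvanish]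
    have hne : ((i,j) : Fin n × Fin n) ≠ (j,i) := fun h => hij (congrArg Prod.fst h)
    rw [Finset.sum_insert (by simpa using hne), Finset.sum_singleton]
    rcases lt_or_gt_of_ne (hij : i ≠ j) with hlt | hgt
    · have e1 : wDD B (i, j) i * wDD B (i, j) j = B i j := by
        simp only [wDD, if_neg hij, if_pos hlt, eq_self_iff_true, if_true,
          if_neg (fun h : i = j => hij h), if_neg (fun h : j = i => hij h.symm),
          add_zero, zero_add]
        exact sign_mul_abs' (B i j)
      have e2 : wDD B (j, i) i * wDD B (j, i) j = 0 := by
        simp only [wDD, if_neg (fun h : j = i => hij h.symm),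
          if_neg (asymm hlt : ¬ j < i), zero_mul]
      rw [e1, e2, add_zero]
    · have e1 : wDD B (i, j) i * wDD B (i, j) j = 0 := by
        simp only [wDD, if_neg hij, if_neg (asymm hgt : ¬ i < j), zero_mul]
      have e2 : wDD B (j, i) i * wDD B (j, i) j = B i j := by
        simp only [wDD, if_neg (fun h : j = i => hij h.symm), if_pos hgt,
          eq_self_iff_true, if_true, if_neg (fun h : i = j => hij h),
          if_neg (fun h : j = i => hij h.symm), add_zero, zero_add]
        rw [mul_comm, sign_mul_abs' (B j i), hsymm i j]
      rw [e1, e2, zero_add]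

lemma wDD_supp {n : ℕ} (B : Matrix (Fin n) (Fin n) ℝ) (p : Fin n × Fin n) :
    (Finset.univ.filter fun i => wDD B p i ≠ 0).card ≤ 2 := by
  classical
  have h : (Finset.univ.filter fun i => wDD B p i ≠ 0) ⊆ {p.1, p.2} := by
    intro i hi
    simp only [mem_filter] at hi
    by_contra hc
    simp only [mem_insert, mem_singleton, not_or] at hc
    apply hi.2
    simp only [wDD, if_neg hc.1, if_neg hc.2, add_zero]
    split_ifs <;> rfl
  calc _ ≤ ({p.1, p.2} : Finset (Fin n)).card := Finset.card_le_card h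
    _ ≤ 2 := Finset.card_insert_le _ _ |>.trans (by simp)


lemma mem_FW2_of_sum {n : ℕ} {ι : Type} [Fintype ι]
    (A : Matrix (Fin n) (Fin n) ℝ) (hA : A.IsSymm) (w : ι → Fin n → ℝ)
    (hsupp : ∀ c, (Finset.univ.filter fun i => w c i ≠ 0).card ≤ 2)
    (hsum : ∀ i j, A i j = ∑ c, w c i * w c j) : A ∈ FW n 2 := by
  classical
  refine ⟨hA, Fintype.card ι, Matrix.of (fun i c => w ((Fintype.equivFin ι).symm c) i), ?_, ?_⟩
  · ext i j
    rw [Matrix.mul_apply, hsum i j]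
    rw [← Equiv.sum_comp (Fintype.equivFin ι).symm (fun c => w c i * w c j)]
    simp [Matrix.transpose_apply]
  · intro c
    exact hsupp _


lemma exists_pos_scaling (N : ℕ) :
    ∀ (ι : Type) [Fintype ι] [DecidableEq ι], Fintype.card ι ≤ N →
    ∀ (M : Matrix ι ι ℝ), (∀ a b, M a b = M b a) → (∀ a b, a ≠ b → M a b ≤ 0) →
    (∀ x : ι → ℝ, 0 ≤ x ⬝ᵥ M.mulVec x) →
    ∃ d : ι → ℝ, (∀ i, 0 < d i) ∧ ∀ i, 0 ≤ M.mulVec d i := by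
  induction N with
  | zero =>
    intro ι _ _ hcard M _ _ _
    have : IsEmpty ι := Fintype.card_eq_zero_iff.mp (Nat.le_zero.mp hcard)
    exact ⟨fun _ => 1, fun i => isEmptyElim i, fun i => isEmptyElim i⟩
  | succ N IH =>
    intro ι _ _ hcard M hMsym hZ hPSD
    rcases isEmpty_or_nonempty ι with hemp | hne
    · exact ⟨fun _ => 1, fun i => isEmptyElim i, fun i => isEmptyElim i⟩
    have hcardpos : 0 < Fintype.card ι := Fintype.card_pos
    -- minimize the quadratic form over the standard simplex
    set Q : (ι → ℝ) → ℝ := fun x => x ⬝ᵥ M.mulVec x with hQdef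
    have hcont : Continuous Q := by
      simp only [hQdef, dotProduct, mulVec]
      exact continuous_finset_sum _ (fun i _ => (continuous_apply i).mul
        (continuous_finset_sum _ (fun j _ => continuous_const.mul (continuous_apply j))))
    have hx0 : (fun _ : ι => (Fintype.card ι : ℝ)⁻¹) ∈ stdSimplex ℝ ι := by
      constructor
      · intro k
        positivity
      · rw [Finset.sum_const, nsmul_eq_mul, Finset.card_univ,
          mul_inv_cancel₀ (by positivity : (Fintype.card ι : ℝ) ≠ 0)]
    obtain ⟨d0, hd0mem, hmin⟩ := (isCompact_stdSimplex ℝ ι).exists_isMinOn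
      ⟨_, hx0⟩ hcont.continuousOn
    obtain ⟨hd0nonneg, hd0sum⟩ := hd0mem
    have hminle : ∀ y ∈ stdSimplex ℝ ι, Q d0 ≤ Q y := fun y hy => isMinOn_iff.mp hmin y hy
    -- symmetry of the bilinear form
    have hsymQ : ∀ x y : ι → ℝ, x ⬝ᵥ M.mulVec y = y ⬝ᵥ M.mulVec x := by
      intro x y
      simp only [dotProduct, mulVec, Finset.mul_sum]
      rw [Finset.sum_comm]
      exact Finset.sum_congr rfl fun j _ => Finset.sum_congr rfl fun i _ => by
        rw [hMsym i j]; ring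
    -- first-order optimality
    have key : ∀ a b : ι, 0 < d0 b → M.mulVec d0 b ≤ M.mulVec d0 a := by
      intro a b hb
      by_cases hab : a = b
      · subst hab; exact le_refl _
      set v : ι → ℝ := fun k => (if k = a then 1 else 0) - (if k = b then 1 else 0) with hvdef
      have hva : v a = 1 := by simp [hvdef, hab]
      have hvb : v b = -1 := by simp [hvdef, Ne.symm hab]
      have hvsum : ∑ k, v k = 0 := by
        simp [hvdef, Finset.sum_sub_distrib, Finset.sum_ite_eq', Finset.mem_univ]
      have hmem : ∀ t : ℝ, 0 ≤ t → t ≤ d0 b → (d0 + t • v) ∈ stdSimplex ℝ ι := by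
        intro t ht htb
        constructor
        · intro k
          simp only [Pi.add_apply, Pi.smul_apply, smul_eq_mul, hvdef]
          rcases eq_or_ne k a with rfl | hka
          · rw [if_pos rfl, if_neg hab]
            have := hd0nonneg k; nlinarith
          · rw [if_neg hka]
            rcases eq_or_ne k b with rfl | hkb
            · rw [if_pos rfl]; have := hd0nonneg k; nlinarith
            · rw [if_neg hkb]; have := hd0nonneg k; nlinarith
        · simp only [Pi.add_apply, Pi.smul_apply, smul_eq_mul]
          rw [Finset.sum_add_distrib, hd0sum, ← Finset.mul_sum, hvsum, mul_zero, add_zero]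
      have hexp : ∀ t : ℝ, Q (d0 + t • v) =
          Q d0 + 2 * t * (v ⬝ᵥ M.mulVec d0) + t ^ 2 * (v ⬝ᵥ M.mulVec v) := by
        intro t
        simp only [hQdef, mulVec_add, mulVec_smul, dotProduct_add, add_dotProduct,
          dotProduct_smul, smul_dotProduct, smul_eq_mul]
        rw [hsymQ d0 v]
        ring
      have hα : 0 ≤ v ⬝ᵥ M.mulVec d0 := by
        by_contra hneg
        push_neg at hneg
        set α := v ⬝ᵥ M.mulVec d0
        set β := v ⬝ᵥ M.mulVec v with hβdef
        have hβ : 0 ≤ β := hPSD v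
        set t := min (d0 b) (-α / (β + 1)) with htdef
        have ht0 : 0 < t := lt_min hb (div_pos (by linarith) (by linarith))
        have htb : t ≤ d0 b := min_le_left _ _
        have htβ : t * β ≤ -α := by
          have h1 : t ≤ -α / (β + 1) := min_le_right _ _
          have h2 : t * β ≤ (-α / (β + 1)) * β := by nlinarith
          have h3 : (-α / (β + 1)) * β ≤ -α := by
            rw [div_mul_eq_mul_div, div_le_iff₀ (by linarith)]
            nlinarith
          linarith
        have hlt : Q (d0 + t • v) < Q d0 := by
          rw [hexp t]
          nlinarith
        exact absurd (hminle _ (hmem t ht0.le htb)) (not_le.mpr hlt)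
      have hvdot : v ⬝ᵥ M.mulVec d0 = M.mulVec d0 a - M.mulVec d0 b := by
        simp only [dotProduct, hvdef, sub_mul, one_mul, ite_mul, zero_mul,
          Finset.sum_sub_distrib, Finset.sum_ite_eq', Finset.mem_univ, if_true]
      rw [hvdot] at hα
      linarith
    obtain ⟨b0, hb0⟩ : ∃ b, 0 < d0 b := by
      by_contra h
      push_neg at h
      have : ∀ b, d0 b = 0 := fun b => le_antisymm (h b) (hd0nonneg b)
      rw [Finset.sum_congr rfl (fun b _ => this b), Finset.sum_const_zero] at hd0sum
      norm_num at hd0sum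
    set μ := M.mulVec d0 b0 with hμdef
    have hμ_le : ∀ a, μ ≤ M.mulVec d0 a := fun a => key a b0 hb0
    have hsupp_eq : ∀ b, 0 < d0 b → M.mulVec d0 b = μ :=
      fun b hb => le_antisymm (key b0 b hb) (hμ_le b)
    have hμQ : Q d0 = μ := by
      have : Q d0 = ∑ k, d0 k * M.mulVec d0 k := rfl
      rw [this, Finset.sum_congr rfl (fun k _ => ?_), ← Finset.sum_mul, hd0sum, one_mul]
      rcases eq_or_lt_of_le (hd0nonneg k) with h | h
      · rw [← h, zero_mul, zero_mul]
      · rw [hsupp_eq k h]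
    have hμ0 : 0 ≤ μ := hμQ ▸ hPSD d0
    by_cases hall : ∀ k, 0 < d0 k
    · exact ⟨d0, hall, fun k => le_trans hμ0 (hμ_le k)⟩
    -- some zero entries: recurse on the zero set
    push_neg at hall
    obtain ⟨k0, hk0le⟩ := hall
    have hk0 : d0 k0 = 0 := le_antisymm hk0le (hd0nonneg k0)
    have hterm : ∀ k, d0 k = 0 → ∀ jj, M k jj * d0 jj ≤ 0 := by
      intro k hk jj
      rcases eq_or_ne jj k with rfl | hj
      · rw [hk, mul_zero]
      · exact mul_nonpos_iff.mpr (Or.inr ⟨hZ k jj (Ne.symm hj), hd0nonneg jj⟩)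
    have hMv : ∀ (x : ι → ℝ) k, M.mulVec x k = ∑ jj, M k jj * x jj := fun x k => rfl
    have hnonposk : ∀ k, d0 k = 0 → M.mulVec d0 k ≤ 0 := by
      intro k hk
      rw [hMv]
      exact Finset.sum_nonpos (fun jj _ => hterm k hk jj)
    have hμz : μ = 0 := le_antisymm (le_trans (hμ_le k0) (hnonposk k0 hk0)) hμ0
    have hcross : ∀ k, d0 k = 0 → ∀ jj, d0 jj ≠ 0 → M k jj = 0 := by
      intro k hk jj hjj
      have hsum0 : ∑ jj, M k jj * d0 jj = 0 :=
        le_antisymm (by rw [← hMv]; exact hnonposk k hk)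
          (by rw [← hMv]; exact hμz ▸ hμ_le k)
      have h0 := (Finset.sum_eq_zero_iff_of_nonpos (fun jj _ => hterm k hk jj)).mp hsum0
        jj (Finset.mem_univ jj)
      rcases mul_eq_zero.mp h0 with h | h
      · exact h
      · exact absurd h hjj
    set p : ι → Prop := fun k => d0 k = 0 with hpdef
    have hcard' : Fintype.card {k // p k} ≤ N := by
      have := Fintype.card_subtype_lt (p := p) (x := b0) (ne_of_gt hb0)
      omega
    set M' : Matrix {k // p k} {k // p k} ℝ := Matrix.of (fun a b => M a.1 b.1) with hM'def
    have houter : ∀ (f : ι → ℝ), (∀ k, ¬ p k → f k = 0) →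
        ∑ k, f k = ∑ a : {k // p k}, f a.1 := by
      intro f hf
      rw [← Finset.sum_subtype (Finset.univ.filter p) (by simp) f]
      exact (Finset.sum_subset (Finset.filter_subset _ _)
        (fun k _ hk => hf k (by simpa using hk))).symm
    have hPSD' : ∀ x : {k // p k} → ℝ, 0 ≤ x ⬝ᵥ M'.mulVec x := by
      intro x
      set x' : ι → ℝ := fun k => if h : p k then x ⟨k, h⟩ else 0 with hx'def
      have hx'0 : ∀ k, ¬ p k → x' k = 0 := fun k h => dif_neg h
      have hx'a : ∀ a : {k // p k}, x' a.1 = x a := fun a => dif_pos a.2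
      have hinner : ∀ k, M.mulVec x' k = ∑ b : {k // p k}, M k b.1 * x b := by
        intro k
        rw [hMv, houter (fun jj => M k jj * x' jj)
          (fun jj hjj => by show M k jj * x' jj = 0; rw [hx'0 jj hjj, mul_zero])]
        exact Finset.sum_congr rfl (fun b _ => by rw [hx'a b])
      have : x' ⬝ᵥ M.mulVec x' = x ⬝ᵥ M'.mulVec x := by
        rw [show x' ⬝ᵥ M.mulVec x' = ∑ k, x' k * M.mulVec x' k from rfl,
          houter (fun k => x' k * M.mulVec x' k)
            (fun k hk => by show x' k * M.mulVec x' k = 0; rw [hx'0 k hk, zero_mul])]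
        refine Finset.sum_congr rfl (fun a _ => ?_)
        rw [hx'a a, hinner a.1]
        rfl
      rw [← this]
      exact hPSD x'
    obtain ⟨d', hd'pos, hd'⟩ := IH {k // p k} hcard' M'
      (fun a b => hMsym a.1 b.1)
      (fun a b hab => hZ a.1 b.1 (fun h => hab (Subtype.ext h)))
      hPSD'
    set d : ι → ℝ := fun k => if h : p k then d' ⟨k, h⟩ else d0 k with hddef
    have hdpos : ∀ k, 0 < d k := by
      intro k
      by_cases h : p k
      · rw [hddef]; simp only [dif_pos h]; exact hd'pos _
      · rw [hddef]; simp only [dif_neg h]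
        exact lt_of_le_of_ne (hd0nonneg k) (Ne.symm h)
    refine ⟨d, hdpos, ?_⟩
    intro k
    by_cases hk : p k
    · have : M.mulVec d k = ∑ b : {k // p k}, M k b.1 * d' b := by
        rw [hMv, houter (fun jj => M k jj * d jj)
          (fun jj hjj => by show M k jj * d jj = 0; rw [hcross k hk jj hjj, zero_mul])]
        refine Finset.sum_congr rfl (fun b _ => ?_)
        rw [hddef]; simp only [dif_pos b.2]
      rw [this]
      exact hd' ⟨k, hk⟩
    · have heq : M.mulVec d k = M.mulVec d0 k := by
        rw [hMv, hMv]
        refine Finset.sum_congr rfl (fun jj _ => ?_)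
        by_cases hj : p jj
        · rw [hMsym k jj, hcross jj hj k hk, zero_mul, zero_mul]
        · rw [hddef]; simp only [dif_neg hj]
      rw [heq, hsupp_eq k (lt_of_le_of_ne (hd0nonneg k) (Ne.symm hk)), hμz]


lemma comp_psd {n m : ℕ} (V : Matrix (Fin n) (Fin m) ℝ)
    (hV : ∀ c, (Finset.univ.filter fun i => V i c ≠ 0).card ≤ 2) (x : Fin n → ℝ) :
    0 ≤ x ⬝ᵥ (Matrix.of fun i j : Fin n =>
      if i = j then (V * Vᵀ) i j else -|(V * Vᵀ) i j|).mulVec x := by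
  classical
  set A := V * Vᵀ with hAdef
  set C : Matrix (Fin n) (Fin n) ℝ :=
    Matrix.of (fun i j : Fin n => if i = j then A i j else -|A i j|) with hCdef
  have hCij : ∀ i j, C i j = if i = j then A i j else -|A i j| := fun i j => rfl
  set y : Fin n → ℝ := fun i => |x i| with hydef
  set s : Fin m → Fin n → ℝ :=
    fun c i => if (∃ k, k < i ∧ V k c ≠ 0) then -|V i c| else |V i c| with hsdef
  have hs0 : ∀ c i, V i c = 0 → s c i = 0 := by
    intro c i h
    rw [hsdef]
    beta_reduce
    split_ifs <;> simp [h]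
  have hs_sq : ∀ c i, s c i * s c i = V i c * V i c := by
    intro c i
    rw [hsdef]
    beta_reduce
    split_ifs <;> simp [abs_mul_abs_self, neg_mul_neg]
  have hpair : ∀ c i j, i < j → V i c ≠ 0 → V j c ≠ 0 →
      s c i = |V i c| ∧ s c j = -|V j c| := by
    intro c i j hij hi hj
    constructor
    · rw [hsdef]
      beta_reduce
      rw [if_neg]
      rintro ⟨k, hk, hkne⟩
      have hsub : ({k, i, j} : Finset (Fin n)) ⊆ Finset.univ.filter fun a => V a c ≠ 0 := by
        intro a ha
        simp only [Finset.mem_insert, Finset.mem_singleton] at ha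
        rcases ha with rfl | rfl | rfl <;> simp [hkne, hi, hj]
      have hcard : ({k, i, j} : Finset (Fin n)).card = 3 := by
        rw [Finset.card_insert_of_notMem, Finset.card_insert_of_notMem, Finset.card_singleton]
        · simp [ne_of_lt hij]
        · simp [ne_of_lt hk, ne_of_lt (hk.trans hij)]
      have := Finset.card_le_card hsub
      rw [hcard] at this
      have := hV c
      omega
    · rw [hsdef]
      beta_reduce
      rw [if_pos ⟨i, hij, hi⟩]
  have hs_off : ∀ c i j, i ≠ j → s c i * s c j = -(|V i c| * |V j c|) := by
    intro c i j hij
    by_cases hi : V i c = 0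
    · rw [hs0 c i hi, hi, zero_mul, abs_zero, zero_mul, neg_zero]
    by_cases hj : V j c = 0
    · rw [hs0 c j hj, hj, mul_zero, abs_zero, mul_zero, neg_zero]
    rcases lt_or_gt_of_ne hij with h | h
    · obtain ⟨e1, e2⟩ := hpair c i j h hi hj
      rw [e1, e2]; ring
    · obtain ⟨e1, e2⟩ := hpair c j i h hj hi
      rw [e1, e2]; ring
  -- pointwise bounds
  have step1 : ∀ i j, y i * (C i j * y j) ≤ x i * (C i j * x j) := by
    intro i j
    rcases eq_or_ne i j with rfl | hij
    · have hyy : y i * y i = x i * x i := abs_mul_abs_self (x i)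
      exact le_of_eq (by linear_combination C i i * hyy)
    · have hC : C i j = -|A i j| := by rw [hCij, if_neg hij]
      have h1 : x i * x j ≤ y i * y j := by
        rw [hydef]
        calc x i * x j ≤ |x i * x j| := le_abs_self _
          _ = |x i| * |x j| := abs_mul _ _
      have h2 : C i j ≤ 0 := by rw [hC]; simp [neg_nonpos, abs_nonneg]
      nlinarith
  have step2 : ∀ i j, (∑ c, s c i * s c j) * (y i * y j) ≤ y i * (C i j * y j) := by
    intro i j
    rcases eq_or_ne i j with rfl | hij
    · have hA : A i i = ∑ c, V i c * V i c := by
        rw [hAdef, Matrix.mul_apply]; rfl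
      have : (∑ c, s c i * s c i) = C i i := by
        rw [Finset.sum_congr rfl (fun c _ => hs_sq c i), hCij, if_pos rfl, hA]
      rw [this]; ring_nf; exact le_refl _
    · have hC : C i j = -|A i j| := by rw [hCij, if_neg hij]
      have hA : A i j = ∑ c, V i c * V j c := by
        rw [hAdef, Matrix.mul_apply]; rfl
      have h1 : (∑ c, s c i * s c j) ≤ C i j := by
        rw [Finset.sum_congr rfl (fun c _ => hs_off c i j hij), hC, Finset.sum_neg_distrib]
        rw [neg_le_neg_iff]
        calc |A i j| = |∑ c, V i c * V j c| := by rw [hA]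
          _ ≤ ∑ c, |V i c * V j c| := Finset.abs_sum_le_sum_abs _ _
          _ = ∑ c, |V i c| * |V j c| := Finset.sum_congr rfl (fun c _ => abs_mul _ _)
      have h2 : 0 ≤ y i * y j := mul_nonneg (abs_nonneg _) (abs_nonneg _)
      calc (∑ c, s c i * s c j) * (y i * y j) ≤ C i j * (y i * y j) :=
            mul_le_mul_of_nonneg_right h1 h2
        _ = y i * (C i j * y j) := by ring
  have step3 : 0 ≤ ∑ i, ∑ j, (∑ c, s c i * s c j) * (y i * y j) := by
    have hre : ∀ i j, (∑ c, s c i * s c j) * (y i * y j)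
        = ∑ c, (s c i * y i) * (s c j * y j) := by
      intro i j
      rw [Finset.sum_mul]
      exact Finset.sum_congr rfl (fun c _ => by ring)
    calc (0:ℝ) ≤ ∑ c, (∑ i, s c i * y i) * (∑ j, s c j * y j) :=
          Finset.sum_nonneg (fun c _ => mul_self_nonneg _)
      _ = ∑ c, ∑ i, ∑ j, (s c i * y i) * (s c j * y j) := by
          refine Finset.sum_congr rfl (fun c _ => ?_)
          rw [Finset.sum_mul_sum]
      _ = ∑ i, ∑ c, ∑ j, (s c i * y i) * (s c j * y j) := Finset.sum_comm
      _ = ∑ i, ∑ j, ∑ c, (s c i * y i) * (s c j * y j) := by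
          exact Finset.sum_congr rfl (fun i _ => Finset.sum_comm)
      _ = ∑ i, ∑ j, (∑ c, s c i * s c j) * (y i * y j) := by
          exact Finset.sum_congr rfl (fun i _ => Finset.sum_congr rfl
            (fun j _ => (hre i j).symm))
  have hfinal : x ⬝ᵥ C.mulVec x = ∑ i, ∑ j, x i * (C i j * x j) := by
    simp only [dotProduct, mulVec, Finset.mul_sum]
  rw [hfinal]
  calc (0:ℝ) ≤ ∑ i, ∑ j, (∑ c, s c i * s c j) * (y i * y j) := step3
    _ ≤ ∑ i, ∑ j, y i * (C i j * y j) :=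
        Finset.sum_le_sum (fun i _ => Finset.sum_le_sum (fun j _ => step2 i j))
    _ ≤ ∑ i, ∑ j, x i * (C i j * x j) :=
        Finset.sum_le_sum (fun i _ => Finset.sum_le_sum (fun j _ => step1 i j))

lemma dad_entry {n : ℕ} (D : Fin n → ℝ) (A : Matrix (Fin n) (Fin n) ℝ) (i j : Fin n) :
    (Matrix.diagonal D * A * Matrix.diagonal D) i j = D i * A i j * D j := by
  rw [Matrix.mul_diagonal, Matrix.diagonal_mul]

lemma fw2_subset_sdd {n : ℕ} : FW n 2 ⊆ SDD n := by
  intro A hAmem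
  obtain ⟨hA, m, V, hAV, hcol⟩ := hAmem
  have hAsym : ∀ a b, A a b = A b a := fun a b => hA.apply b a
  classical
  set C : Matrix (Fin n) (Fin n) ℝ :=
    Matrix.of (fun i j : Fin n => if i = j then A i j else -|A i j|) with hCdef
  have hCij : ∀ i j, C i j = if i = j then A i j else -|A i j| := fun i j => rfl
  have hCsym : ∀ a b, C a b = C b a := by
    intro a b
    rcases eq_or_ne a b with rfl | hab
    · rfl
    · rw [hCij, hCij, if_neg hab, if_neg (Ne.symm hab), hAsym]
  have hCZ : ∀ a b, a ≠ b → C a b ≤ 0 := by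
    intro a b hab
    rw [hCij, if_neg hab]
    simp [abs_nonneg]
  have hCPSD : ∀ x : Fin n → ℝ, 0 ≤ x ⬝ᵥ C.mulVec x := by
    intro x
    have := comp_psd V hcol x
    rw [← hAV] at this
    exact this
  obtain ⟨d, hdpos, hd⟩ := exists_pos_scaling (Fintype.card (Fin n)) (Fin n) le_rfl
    C hCsym hCZ hCPSD
  refine ⟨hA, d, hdpos, ?_, ?_⟩
  · show (Matrix.diagonal d * A * Matrix.diagonal d)ᵀ = _
    rw [Matrix.transpose_mul, Matrix.transpose_mul, Matrix.diagonal_transpose, hA,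
      ← Matrix.mul_assoc]
  · intro i
    have h1 : C.mulVec d i = C i i * d i + ∑ j ∈ Finset.univ.erase i, C i j * d j := by
      rw [show C.mulVec d i = ∑ j, C i j * d j from rfl,
        ← Finset.add_sum_erase Finset.univ _ (Finset.mem_univ i)]
    have h2 : ∑ j ∈ Finset.univ.erase i, C i j * d j
        = -∑ j ∈ Finset.univ.erase i, |A i j| * d j := by
      rw [← Finset.sum_neg_distrib]
      refine Finset.sum_congr rfl (fun j hj => ?_)
      rw [hCij, if_neg (Ne.symm (Finset.ne_of_mem_erase hj))]
      ring
    have h3 : 0 ≤ A i i * d i - ∑ j ∈ Finset.univ.erase i, |A i j| * d j := by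
      have := hd i
      rw [h1, h2, hCij, if_pos rfl] at this
      linarith
    have h4 : ∀ j, |(Matrix.diagonal d * A * Matrix.diagonal d) i j|
        = d i * (|A i j| * d j) := by
      intro j
      rw [dad_entry, abs_mul, abs_mul, abs_of_pos (hdpos i), abs_of_pos (hdpos j)]
      ring
    rw [Finset.sum_congr rfl (fun j _ => h4 j), ← Finset.mul_sum, dad_entry]
    calc d i * ∑ j ∈ Finset.univ.erase i, |A i j| * d j
        ≤ d i * (A i i * d i) :=
          mul_le_mul_of_nonneg_left (by linarith) (hdpos i).le
      _ = d i * A i i * d i := by ring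

lemma sdd_subset_fw2 {n : ℕ} : SDD n ⊆ FW n 2 := by
  intro A hAmem
  obtain ⟨hA, D, hDpos, hDD⟩ := hAmem
  classical
  set B : Matrix (Fin n) (Fin n) ℝ := Matrix.diagonal D * A * Matrix.diagonal D with hBdef
  set w : (Fin n × Fin n) → Fin n → ℝ := fun p i => (D i)⁻¹ * wDD B p i with hwdef
  have hsupp : ∀ p, (Finset.univ.filter fun i => w p i ≠ 0).card ≤ 2 := by
    intro p
    refine le_trans (Finset.card_le_card ?_) (wDD_supp B p)
    intro i hi
    simp only [Finset.mem_filter] at hi ⊢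
    refine ⟨Finset.mem_univ i, fun h => hi.2 ?_⟩
    rw [hwdef]
    beta_reduce
    rw [h, mul_zero]
  have hsum : ∀ i j, A i j = ∑ p : Fin n × Fin n, w p i * w p j := by
    intro i j
    have hDi : D i ≠ 0 := (hDpos i).ne'
    have hDj : D j ≠ 0 := (hDpos j).ne'
    have hstep : ∑ p : Fin n × Fin n, w p i * w p j
        = (D i)⁻¹ * (D j)⁻¹ * B i j := by
      calc ∑ p : Fin n × Fin n, w p i * w p j
          = ∑ p : Fin n × Fin n, (D i)⁻¹ * (D j)⁻¹ * (wDD B p i * wDD B p j) :=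
            Finset.sum_congr rfl (fun p _ => by rw [hwdef]; ring)
        _ = (D i)⁻¹ * (D j)⁻¹ * ∑ p : Fin n × Fin n, wDD B p i * wDD B p j := by
            rw [Finset.mul_sum]
        _ = (D i)⁻¹ * (D j)⁻¹ * B i j := by rw [← dd_decomp B hDD i j]
    rw [hstep, hBdef, dad_entry]
    field_simp
  exact mem_FW2_of_sum A hA w hsupp hsum


/-- `FW(2) = SDD_n`. -/
theorem stmt2 (n : ℕ) (hn : 0 < n) : FW n 2 = SDD n := by
  exact Set.Subset.antisymm fw2_subset_sdd sdd_subset_fw2
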